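/- Let P_s be a sign pattern on n nodes, let A ∈ Q_s(P_s), let λ > 0 be a real number, and let ν ∈ ℝ^n satisfy ν^T A = λ ν^T. Let Z ⊆ V be such that ν_i = 0 for all i ∈ Z. Suppose a configuration with black set C and marking m is reachable from the configuration with black set Z and no marks by finitely many steps of the signing and coloring rule played on the negative looped pattern P_s^−. Then ν_i = 0 for all i ∈ C, and there exists ε ∈ {+1,−1} such that every marked node k with ν_k ≠ 0 satisfies m(k) = sign(ε·ν_k). -/
import Mathlib


/-- An entry of a sign pattern: `+`, `-`, `0`, or `?` (unrestricted). -/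
inductive SignPatEntry : Type
  | pos | neg | zero | unk
deriving DecidableEq

namespace SignPatEntry

/-- Sign inversion: `inv(+) = -`, `inv(-) = +`. -/
def inv : SignPatEntry → SignPatEntry
  | pos => neg
  | neg => pos
  | zero => zero
  | unk => unk

/-- Product of signs (used as `s · P(u,v)`). -/
def mul : SignPatEntry → SignPatEntry → SignPatEntry
  | pos, y => y
  | neg, y => y.inv
  | zero, _ => zero
  | unk, _ => unk

end SignPatEntry

/-- A real number matches a sign-pattern entry. -/
def matchesSign : SignPatEntry → ℝ → Prop
  | .pos, a => 0 < a
  | .neg, a => a < 0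
  | .zero, a => a = 0
  | .unk, _ => True

/-- The qualitative class of a sign pattern: real matrices whose entries have
the prescribed signs. -/
def QClass {n : ℕ} (P : Fin n → Fin n → SignPatEntry)
    (A : Matrix (Fin n) (Fin n) ℝ) : Prop :=
  ∀ i j : Fin n, matchesSign (P i j) (A i j)

/-- A configuration of the signing-and-coloring game: a set of black nodes and a
partial marking of nodes with signs. -/
structure Config (n : ℕ) where
  black : Finset (Fin n)
  mark : Fin n → Option SignPatEntry

/-- The set of white out-neighbors of `v` (out-neighbors of `v` are the `u` with
`P u v ≠ 0`). -/
def Wset {n : ℕ} (P : Fin n → Fin n → SignPatEntry) (c : Config n) (v : Fin n) :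
    Finset (Fin n) :=
  Finset.univ.filter (fun u => u ∉ c.black ∧ P u v ≠ SignPatEntry.zero)

/-- One step of the signing and coloring rule, played on the pattern `P`. -/
inductive Step {n : ℕ} (P : Fin n → Fin n → SignPatEntry) : Config n → Config n → Prop
  /-- (1) a pivot node `v` with a single white out-neighbor `u` forces `u` black. -/
  | force1 (c : Config n) (v u : Fin n)
      (hv : v ∈ c.black ∨ P v v ≠ SignPatEntry.unk)
      (hW : Wset P c v = {u}) :
      Step P c ⟨insert u c.black, c.mark⟩
  /-- (2) if all white out-neighbors of a pivot `v` are marked consistently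
  (all with `m(u) = P(u,v)` or all with `m(u) = -P(u,v)`), they all become black. -/
  | force2 (c : Config n) (v : Fin n)
      (hv : v ∈ c.black ∨ P v v ≠ SignPatEntry.unk)
      (hall : (∀ u ∈ Wset P c v, c.mark u = some (P u v)) ∨
              (∀ u ∈ Wset P c v, c.mark u = some (P u v).inv)) :
      Step P c ⟨c.black ∪ Wset P c v, c.mark⟩
  /-- (3) if exactly one white out-neighbor `w` of a pivot `v` is unmarked, at least one
  is marked, and every marked one satisfies `m(u) = s · P(u,v)`, then `w` gets
  marked with `-s · P(w,v)`. -/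
  | force3 (c : Config n) (v w : Fin n) (s : SignPatEntry)
      (hv : v ∈ c.black ∨ P v v ≠ SignPatEntry.unk)
      (hs : s = SignPatEntry.pos ∨ s = SignPatEntry.neg)
      (hw : w ∈ Wset P c v) (hwnone : c.mark w = none)
      (hmarked : ∀ u ∈ Wset P c v, u ≠ w → c.mark u = some (s.mul (P u v)))
      (hex : ∃ u ∈ Wset P c v, u ≠ w) :
      Step P c ⟨c.black, Function.update c.mark w (some (s.inv.mul (P w v)))⟩
  /-- (4) if no white node is marked, an arbitrary white node may be marked `+`. -/
  | force4 (c : Config n) (u : Fin n)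
      (hnomark : ∀ x : Fin n, x ∉ c.black → c.mark x = none)
      (hu : u ∉ c.black) :
      Step P c ⟨c.black, Function.update c.mark u (some SignPatEntry.pos)⟩

/-- The initial configuration: black set `Z`, no marks. -/
def initConfig {n : ℕ} (Z : Finset (Fin n)) : Config n := ⟨Z, fun _ => none⟩

/-- `Z` is a signed zero forcing set of the pattern `P`. -/
def SignedZFS {n : ℕ} (P : Fin n → Fin n → SignPatEntry) (Z : Finset (Fin n)) : Prop :=
  ∃ c : Config n, Relation.ReflTransGen (Step P) (initConfig Z) c ∧ c.black = Finset.univ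

/-- The negative looped pattern `P⁻`: off-diagonal as `P`; diagonal `-` if
`P i i ∈ {0,-}`, and `?` if `P i i ∈ {+,?}`. -/
def negLooped {n : ℕ} (P : Fin n → Fin n → SignPatEntry) :
    Fin n → Fin n → SignPatEntry := fun i j =>
  if i = j then
    (match P i i with
      | SignPatEntry.zero => SignPatEntry.neg
      | SignPatEntry.neg => SignPatEntry.neg
      | _ => SignPatEntry.unk)
  else P i j

/-- The positive looped pattern `P⁺`: off-diagonal as `P`; diagonal `+` if
`P i i ∈ {0,+}`, and `?` if `P i i ∈ {-,?}`. -/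
def posLooped {n : ℕ} (P : Fin n → Fin n → SignPatEntry) :
    Fin n → Fin n → SignPatEntry := fun i j =>
  if i = j then
    (match P i i with
      | SignPatEntry.zero => SignPatEntry.pos
      | SignPatEntry.pos => SignPatEntry.pos
      | _ => SignPatEntry.unk)
  else P i j

/-- The sign of a real number, as a sign-pattern entry. -/
noncomputable def sgnR (x : ℝ) : SignPatEntry :=
  if 0 < x then SignPatEntry.pos else if x < 0 then SignPatEntry.neg else SignPatEntry.zero

/-! ### Auxiliary lemmas -/

/-- Real value of a sign entry. -/
noncomputable def svalE : SignPatEntry → ℝ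
  | .pos => 1
  | .neg => -1
  | _ => 0

lemma svalE_pm {σ : SignPatEntry} (h : σ = .pos ∨ σ = .neg) :
    svalE σ = 1 ∨ svalE σ = -1 := by
  rcases h with h | h <;> subst h <;> simp [svalE]

lemma matchesSign_pm {σ : SignPatEntry} {x : ℝ} (h : σ = .pos ∨ σ = .neg)
    (hm : matchesSign σ x) : 0 < svalE σ * x := by
  rcases h with h | h <;> subst h <;>
    simp only [matchesSign, svalE] at hm ⊢ <;> nlinarith

lemma sgnR_of_pos {σ : SignPatEntry} {x : ℝ} (h : σ = .pos ∨ σ = .neg)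
    (hx : 0 < svalE σ * x) : σ = sgnR x := by
  rcases h with h | h <;> subst h <;> simp only [svalE] at hx
  · rw [one_mul] at hx; rw [sgnR, if_pos hx]
  · have hx' : x < 0 := by nlinarith
    rw [sgnR, if_neg (lt_asymm hx'), if_pos hx']

lemma sval_sgnR {x : ℝ} (hx : x ≠ 0) :
    (sgnR x = .pos ∨ sgnR x = .neg) ∧ 0 < svalE (sgnR x) * x := by
  rcases hx.lt_or_gt with h | h
  · rw [sgnR, if_neg (lt_asymm h), if_pos h]
    constructor
    · right; rfl
    · simp [svalE]; linarith
  · rw [sgnR, if_pos h]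
    constructor
    · left; rfl
    · simpa [svalE] using h

lemma svalE_mul {s : SignPatEntry} (hs : s = .pos ∨ s = .neg) (σ : SignPatEntry) :
    svalE (s.mul σ) = svalE s * svalE σ := by
  rcases hs with h | h <;> subst h <;> cases σ <;>
    simp [SignPatEntry.mul, SignPatEntry.inv, svalE]

lemma mul_pm {s σ : SignPatEntry} (hs : s = .pos ∨ s = .neg)
    (hσ : σ = .pos ∨ σ = .neg) : s.mul σ = .pos ∨ s.mul σ = .neg := by
  rcases hs with h | h <;> rcases hσ with h' | h' <;> subst h <;> subst h' <;>
    simp [SignPatEntry.mul, SignPatEntry.inv]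

lemma inv_pm {s : SignPatEntry} (hs : s = .pos ∨ s = .neg) :
    s.inv = .pos ∨ s.inv = .neg := by
  rcases hs with h | h <;> subst h <;> simp [SignPatEntry.inv]

lemma svalE_inv (σ : SignPatEntry) : svalE σ.inv = -svalE σ := by
  cases σ <;> simp [SignPatEntry.inv, svalE]

lemma samesign_trans {a b c : ℝ} (h1 : 0 < a * b) (h2 : 0 < b * c) : 0 < a * c := by
  rcases lt_trichotomy b 0 with h | h | h
  · have ha : a < 0 := by nlinarith
    have hc : c < 0 := by nlinarith
    exact mul_pos_of_neg_of_neg ha hc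
  · rw [h, mul_zero] at h1; exact absurd h1 (lt_irrefl 0)
  · have ha : 0 < a := by nlinarith
    have hc : 0 < c := by nlinarith
    exact mul_pos ha hc

lemma negLooped_diag_ne_zero {n : ℕ} (P : Fin n → Fin n → SignPatEntry) (v : Fin n) :
    negLooped P v v ≠ SignPatEntry.zero := by
  cases h : P v v <;> simp [negLooped, h]

/-- If `ν` is a left eigenvector of `A ∈ Q_s(P_s)` for `λ > 0` vanishing
on `Z`, and a configuration `(C, m)` is reachable from `(Z, no marks)` by the signing
and coloring rule on the negative looped pattern `P_s⁻`, then `ν` vanishes on `C` and,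
for some `ε ∈ {+1, -1}`, every marked node `k` with `ν k ≠ 0` has mark `sign(ε · ν k)`. -/
theorem stmt0 {n : ℕ} (P : Fin n → Fin n → SignPatEntry)
    (hP : ∀ i j : Fin n, i ≠ j → P i j ≠ SignPatEntry.unk)
    (A : Matrix (Fin n) (Fin n) ℝ) (hA : QClass P A)
    (lam : ℝ) (hlam : 0 < lam)
    (ν : Fin n → ℝ) (hν : Matrix.vecMul ν A = lam • ν)
    (Z : Finset (Fin n)) (hZ : ∀ i ∈ Z, ν i = 0)
    (c : Config n)
    (hreach : Relation.ReflTransGen (Step (negLooped P)) (initConfig Z) c) :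
    (∀ i ∈ c.black, ν i = 0) ∧
    ∃ ε : ℝ, (ε = 1 ∨ ε = -1) ∧
      ∀ (k : Fin n) (σ : SignPatEntry), c.mark k = some σ → ν k ≠ 0 →
        σ = sgnR (ε * ν k) := by
  -- the "balance" function at a pivot column v
  set B : Fin n → Fin n → ℝ := fun u v => A u v - if u = v then lam else 0 with hB
  -- full column sum vanishes
  have hsum0 : ∀ v : Fin n, ∑ u : Fin n, ν u * B u v = 0 := by
    intro v
    have h := congrFun hν v
    simp only [Matrix.vecMul, dotProduct, Pi.smul_apply, smul_eq_mul] at h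
    have h2 : ∑ u : Fin n, ν u * B u v
        = (∑ u : Fin n, ν u * A u v) - ν v * lam := by
      simp only [hB, mul_sub, Finset.sum_sub_distrib, mul_ite, mul_zero]
      congr 1
      simp
    rw [h2, h]; ring
  -- sum restricted to white out-neighbors vanishes
  have hsumW : ∀ (c : Config n), (∀ i ∈ c.black, ν i = 0) → ∀ v : Fin n,
      ∑ u ∈ Wset (negLooped P) c v, ν u * B u v = 0 := by
    intro c hb v
    rw [Wset, Finset.sum_filter_of_ne, hsum0 v]
    intro u _ hne
    constructor
    · intro hub
      exact hne (by rw [hb u hub, zero_mul])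
    · intro hz
      have huv : u ≠ v := fun h => negLooped_diag_ne_zero P v (h ▸ hz)
      have hz' : P u v = SignPatEntry.zero := by
        rw [negLooped, if_neg huv] at hz; exact hz
      have : A u v = 0 := by have := hA u v; rw [hz'] at this; exact this
      exact hne (by simp [hB, this, if_neg huv])
  -- sign facts at a pivot
  have hsign : ∀ (c : Config n) (v : Fin n),
      (v ∈ c.black ∨ negLooped P v v ≠ SignPatEntry.unk) →
      ∀ u ∈ Wset (negLooped P) c v,
        (negLooped P u v = .pos ∨ negLooped P u v = .neg) ∧
        0 < svalE (negLooped P u v) * B u v := by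
    intro c v hv u hu
    rw [Wset, Finset.mem_filter] at hu
    obtain ⟨-, hunb, hunz⟩ := hu
    by_cases huv : u = v
    · subst huv
      have hdiag : negLooped P u u ≠ SignPatEntry.unk := by
        rcases hv with h | h
        · exact absurd h hunb
        · exact h
      have hm := hA u u
      have hBu : B u u = A u u - lam := by simp [hB]
      cases hPu : P u u <;> rw [hPu] at hm
      · exact absurd (by simp [negLooped, hPu]) hdiag
      · have hnl : negLooped P u u = SignPatEntry.neg := by simp [negLooped, hPu]
        rw [hnl, hBu]
        refine ⟨Or.inr rfl, ?_⟩
        simp only [matchesSign] at hm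
        simp only [svalE]
        nlinarith
      · have hnl : negLooped P u u = SignPatEntry.neg := by simp [negLooped, hPu]
        rw [hnl, hBu]
        refine ⟨Or.inr rfl, ?_⟩
        simp only [matchesSign] at hm
        simp only [svalE]
        nlinarith
      · exact absurd (by simp [negLooped, hPu]) hdiag
    · have hoff : negLooped P u v = P u v := by rw [negLooped, if_neg huv]
      have hpm : P u v = .pos ∨ P u v = .neg := by
        have h1 : P u v ≠ .unk := hP u v huv
        have h2 : P u v ≠ .zero := by rw [hoff] at hunz; exact hunz
        cases hPu : P u v
        · exact Or.inl rfl
        · exact Or.inr rfl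
        · exact absurd hPu h2
        · exact absurd hPu h1
      have hBu : B u v = A u v := by simp [hB, if_neg huv]
      rw [hoff, hBu]
      exact ⟨hpm, matchesSign_pm hpm (hA u v)⟩
  -- main induction along the reachability relation
  clear hν
  induction hreach with
  | refl =>
      refine ⟨hZ, 1, Or.inl rfl, ?_⟩
      intro k σ hk _
      exact absurd hk (by simp [initConfig])
  | @tail b c' hsteps hstep ih =>
      obtain ⟨ihb, ε, hε, ihm⟩ := ih
      have hε0 : ε ≠ 0 := by rcases hε with h | h <;> rw [h] <;> norm_num
      cases hstep with
      | force1 v u hv hW =>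
          refine ⟨?_, ε, hε, ihm⟩
          intro i hi
          have hi' : i ∈ insert u b.black := hi
          rcases Finset.mem_insert.mp hi' with rfl | hi2
          · -- the single white neighbor has ν = 0
            have hs := hsumW b ihb v
            rw [hW, Finset.sum_singleton] at hs
            have hsg := (hsign b v hv i (by rw [hW]; exact Finset.mem_singleton_self i)).2
            by_contra hνu
            have hBz : B i v = 0 := by
              rcases mul_eq_zero.mp hs with h | h
              · exact absurd h hνu
              · exact h
            rw [hBz, mul_zero] at hsg
            exact lt_irrefl 0 hsg
          · exact ihb i hi2
      | force2 v hv hall =>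
          -- generic zero-forcing helper
          have main : ∀ t : ℝ, (t = 1 ∨ t = -1) →
              (∀ u ∈ Wset (negLooped P) b v, ν u ≠ 0 → 0 < t * (ν u * B u v)) →
              ∀ x ∈ Wset (negLooped P) b v, ν x = 0 := by
            intro t ht hpos x hx
            have hnn : ∀ u ∈ Wset (negLooped P) b v, 0 ≤ t * (ν u * B u v) := by
              intro u hu
              by_cases h : ν u = 0
              · simp [h]
              · exact (hpos u hu h).le
            have hsum : ∑ u ∈ Wset (negLooped P) b v, t * (ν u * B u v) = 0 := by
              rw [← Finset.mul_sum, hsumW b ihb v, mul_zero]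
            have h0 := (Finset.sum_eq_zero_iff_of_nonneg hnn).mp hsum x hx
            by_contra hνx
            exact absurd h0 (ne_of_gt (hpos x hx hνx))
          have hzero : ∀ x ∈ Wset (negLooped P) b v, ν x = 0 := by
            rcases hall with hall | hall
            · refine main ε hε ?_
              intro u hu hνu
              obtain ⟨hpm, hBpos⟩ := hsign b v hv u hu
              have hmk := ihm u _ (hall u hu) hνu
              have hεν : ε * ν u ≠ 0 := mul_ne_zero hε0 hνu
              have h1 := (sval_sgnR hεν).2
              rw [← hmk] at h1
              -- 0 < svalE σ * (ε * ν u), 0 < svalE σ * B u v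
              have h2 : 0 < (ε * ν u) * svalE (negLooped P u v) := by linarith [h1]
              have h3 := samesign_trans h2 hBpos
              linarith [h3]
            · refine main (-ε) (by rcases hε with h | h <;> rw [h] <;> norm_num) ?_
              intro u hu hνu
              obtain ⟨hpm, hBpos⟩ := hsign b v hv u hu
              have hmk := ihm u _ (hall u hu) hνu
              have hεν : ε * ν u ≠ 0 := mul_ne_zero hε0 hνu
              have h1 := (sval_sgnR hεν).2
              rw [← hmk, svalE_inv] at h1
              have h2 : 0 < ((-ε) * ν u) * svalE (negLooped P u v) := by nlinarith [h1]
              have h3 := samesign_trans h2 hBpos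
              linarith [h3]
          refine ⟨?_, ε, hε, ihm⟩
          intro i hi
          have hi' : i ∈ b.black ∪ Wset (negLooped P) b v := hi
          rcases Finset.mem_union.mp hi' with h | h
          · exact ihb i h
          · exact hzero i h
      | force3 v w s hv hs hw hwnone hmarked hex =>
          refine ⟨ihb, ε, hε, ?_⟩
          intro k σ hk hνk
          by_cases hkw : k = w
          · subst hkw
            have hk' : some (SignPatEntry.mul s.inv (negLooped P k v)) = some σ := by
              rw [← hk]; exact (Function.update_self k _ b.mark).symm
            have hσ : σ = SignPatEntry.mul s.inv (negLooped P k v) :=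
              (Option.some.inj hk').symm
            subst hσ
            -- sign bookkeeping
            obtain ⟨hpmw, hBw⟩ := hsign b v hv k hw
            set t : ℝ := svalE s * ε with htdef
            have ht : t = 1 ∨ t = -1 := by
              rcases svalE_pm hs with h | h <;> rcases hε with h' | h' <;>
                rw [htdef, h, h'] <;> norm_num
            have hnn : ∀ u ∈ (Wset (negLooped P) b v).erase k,
                0 ≤ t * (ν u * B u v) := by
              intro u hu
              obtain ⟨hne, hu'⟩ := Finset.mem_erase.mp hu
              by_cases h : ν u = 0
              · simp [h]
              obtain ⟨hpm, hBpos⟩ := hsign b v hv u hu'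
              have hmk := ihm u _ (hmarked u hu' hne) h
              have hεν : ε * ν u ≠ 0 := mul_ne_zero hε0 h
              have h1 := (sval_sgnR hεν).2
              rw [← hmk, svalE_mul hs] at h1
              -- 0 < svalE s * svalE σu * (ε * ν u)
              have h2 : 0 < (svalE s * (ε * ν u)) * svalE (negLooped P u v) := by
                linarith [h1]
              have h3 := samesign_trans h2 hBpos
              -- h3 : 0 < svalE s * (ε * ν u) * B u v
              rw [htdef]
              nlinarith [h3]
            have hsplit := Finset.add_sum_erase (Wset (negLooped P) b v)
              (fun u => ν u * B u v) hw
            have hsumv := hsumW b ihb v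
            have hSw : ν k * B k v = -∑ u ∈ (Wset (negLooped P) b v).erase k,
                ν u * B u v := by
              rw [← hsplit] at hsumv
              beta_reduce at hsumv
              linarith [hsumv]
            have hle : t * (ν k * B k v) ≤ 0 := by
              rw [hSw, mul_neg, neg_nonpos, Finset.mul_sum]
              exact Finset.sum_nonneg hnn
            have hBk0 : B k v ≠ 0 := by
              intro h
              rw [h, mul_zero] at hBw
              exact lt_irrefl 0 hBw
            have ht0 : t ≠ 0 := by rcases ht with h | h <;> rw [h] <;> norm_num
            have hlt : t * (ν k * B k v) < 0 :=
              lt_of_le_of_ne hle (mul_ne_zero ht0 (mul_ne_zero hνk hBk0))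
            -- conclude: sign of the new mark
            refine sgnR_of_pos (mul_pm (inv_pm hs) hpmw) ?_
            rw [svalE_mul (inv_pm hs), svalE_inv]
            -- goal : 0 < -svalE s * svalE σw * (ε * ν k)
            have h4 : 0 < (-(svalE s * ε * ν k)) * B k v := by
              rw [htdef] at hlt; nlinarith [hlt]
            have h5 : 0 < B k v * svalE (negLooped P k v) := by linarith [hBw]
            have h6 := samesign_trans h4 h5
            nlinarith [h6]
          · have hk' : b.mark k = some σ := by
              rw [← hk]; exact (Function.update_of_ne hkw _ b.mark).symm
            exact ihm k σ hk' hνk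
      | force4 u hnomark hu =>
          refine ⟨ihb, if 0 < ν u then 1 else -1, by split <;> norm_num, ?_⟩
          intro k σ hk hνk
          by_cases hku : k = u
          · subst hku
            have hk' : some SignPatEntry.pos = some σ := by
              rw [← hk]; exact (Function.update_self k _ b.mark).symm
            have hσ : σ = SignPatEntry.pos := (Option.some.inj hk').symm
            subst hσ
            by_cases hpos : 0 < ν k
            · rw [if_pos hpos, one_mul, sgnR, if_pos hpos]
            · have hneg : ν k < 0 := lt_of_le_of_ne (not_lt.mp hpos) hνk
              have h1 : 0 < -1 * ν k := by linarith
              rw [if_neg hpos, sgnR, if_pos h1]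
          · have hk' : b.mark k = some σ := by
              rw [← hk]; exact (Function.update_of_ne hku _ b.mark).symm
            by_cases hkb : k ∈ b.black
            · exact absurd (ihb k hkb) hνk
            · rw [hnomark k hkb] at hk'
              exact absurd hk' (by simp)
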